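/- arXiv:1010.0424 — 4 statements merged into one kernel-verified Lean document; each statement's English description precedes it below -/
import Mathlib

section
/- If a bounded set of polyominoes is killed by some 2-paving R, then it is a loser in the weak (1,2)-achievement game: the breaker wins with the paving strategy based on R. -/
/-- A cell of the rectangular board. -/
abbrev Cell : Type := ℤ × ℤ

/-- Two cells are adjacent if they differ by (±1,0) or (0,±1). -/
def Adjacent (a b : Cell) : Prop :=
  (a.1 - b.1).natAbs + (a.2 - b.2).natAbs = 1

/-- A polyomino is a nonempty subset of ℤ² connected through adjacent cells. -/
def IsPolyomino (P : Set Cell) : Prop :=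
  P.Nonempty ∧ ∀ a ∈ P, ∀ b ∈ P,
    Relation.ReflTransGen (fun x y => x ∈ P ∧ y ∈ P ∧ Adjacent x y) a b

/-- Symmetries of the board: compositions of an integer translation with one of the
eight signed/swap linear maps (rotations by multiples of 90° and reflections). -/
def IsSym (f : Cell → Cell) : Prop :=
  ∃ (t : Cell) (a b s : Bool), ∀ p : Cell,
    f p = (t.1 + (if a then (if s then p.2 else p.1) else -(if s then p.2 else p.1)),
           t.2 + (if b then (if s then p.1 else p.2) else -(if s then p.1 else p.2)))

/-- Two subsets of ℤ² are congruent if one is the image of the other under a symmetry. -/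
def CellCongruent (A B : Set Cell) : Prop := ∃ f, IsSym f ∧ f '' A = B

/-- `Ancestor P Q` (written P ⊑ Q): `Q` contains a subset congruent to `P`. -/
def Ancestor (P Q : Set Cell) : Prop := ∃ S, S ⊆ Q ∧ CellCongruent P S

/-- `Simpler S T` (written S ⪯ T): every member of `T` has an ancestor in `S`. -/
def Simpler (S T : Set (Set Cell)) : Prop := ∀ Q ∈ T, ∃ P ∈ S, Ancestor P Q

/-- A team: a set of polyominoes no member of which is an ancestor of another member. -/
def IsTeam (F : Set (Set Cell)) : Prop :=
  (∀ P ∈ F, IsPolyomino P) ∧ ∀ P ∈ F, ∀ Q ∈ F, P ≠ Q → ¬ Ancestor P Q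

/-- The cells marked so far, given the list of the maker's moves and
the list of the breaker's (pairs of) moves. -/
def markedCells (ms : List Cell) (bs : List (Cell × Cell)) : Set Cell :=
  {c | c ∈ ms ∨ ∃ p ∈ bs, c = p.1 ∨ c = p.2}

/-- Maker strategy: from the maker's past moves and the breaker's past moves,
produce the maker's next mark. -/
abbrev MStrategy := List Cell → List (Cell × Cell) → Cell

/-- Breaker strategy: from the maker's moves so far (including his latest one) and the
breaker's past moves, produce the breaker's next two marks. -/
abbrev BStrategy := List Cell → List (Cell × Cell) → Cell × Cell

/-- A legal maker strategy always marks a previously unmarked cell. -/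
def MLegal (σ : MStrategy) : Prop := ∀ ms bs, σ ms bs ∉ markedCells ms bs

/-- A legal breaker strategy always marks two distinct previously unmarked cells. -/
def BLegal (τ : BStrategy) : Prop :=
  ∀ ms bs, (τ ms bs).1 ≠ (τ ms bs).2 ∧
    (τ ms bs).1 ∉ markedCells ms bs ∧ (τ ms bs).2 ∉ markedCells ms bs

/-- The lists of moves after `n` full rounds of the weak (1,2)-achievement game,
the maker moving first in each round. -/
def play (σ : MStrategy) (τ : BStrategy) : ℕ → List Cell × List (Cell × Cell)
  | 0 => ([], [])
  | n + 1 =>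
      let p := play σ τ n
      let mv := σ p.1 p.2
      (p.1 ++ [mv], p.2 ++ [τ (p.1 ++ [mv]) p.2])

/-- The set of cells marked by the maker during the first `n` rounds. -/
def makerSet (σ : MStrategy) (τ : BStrategy) (n : ℕ) : Set Cell :=
  {c | c ∈ (play σ τ n).1}

/-- The maker achieves `F` in the play of `σ` against `τ`: at some finite stage his
marked cells contain a subset congruent to a member of `F`. -/
def Achieves (F : Set (Set Cell)) (σ : MStrategy) (τ : BStrategy) : Prop :=
  ∃ n, ∃ Q ∈ F, Ancestor Q (makerSet σ τ n)

/-- A (bounded) set of polyominoes is a winner of the weak (1,2)-achievement game if the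
maker has a legal strategy achieving it against every legal breaker strategy. -/
def GameWinner (F : Set (Set Cell)) : Prop :=
  ∃ σ, MLegal σ ∧ ∀ τ, BLegal τ → Achieves F σ τ

/-- A set of polyominoes is bounded if all its members are finite. -/
def Bounded (F : Set (Set Cell)) : Prop := ∀ P ∈ F, P.Finite

/-- `G` is a bounded restriction of `T`: `G = {F_P : P ∈ T}` for a choice of a finite
polyomino ancestor `F_P ⊑ P` for each `P ∈ T`. -/
def BoundedRestriction (T G : Set (Set Cell)) : Prop :=
  ∃ f : Set Cell → Set Cell,
    (∀ P ∈ T, (f P).Finite ∧ IsPolyomino (f P) ∧ Ancestor (f P) P) ∧ G = f '' T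

/-- Winner for a possibly unbounded set of polyominoes: a bounded set is a winner if the
maker can achieve it; an unbounded set is a winner if every bounded restriction is. -/
def Winner (F : Set (Set Cell)) : Prop :=
  (Bounded F ∧ GameWinner F) ∨
  (¬ Bounded F ∧ ∀ G, BoundedRestriction F G → GameWinner G)

/-- The skinny polyomino `S_n`: `n` cells in a horizontal row. -/
def Srow (n : ℕ) : Set Cell := {p | 0 ≤ p.1 ∧ p.1 < (n : ℤ) ∧ p.2 = 0}

/-- The one-way infinite skinny polyomino `S_∞`. -/
def Sinf : Set Cell := {p | 0 ≤ p.1 ∧ p.2 = 0}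

/-- The L-tromino `L_2`. -/
def L2 : Set Cell := {(0, 0), (1, 0), (1, 1)}

/-- The L-tetromino `L_3`. -/
def L3 : Set Cell := {(0, 0), (1, 0), (2, 0), (2, 1)}

/-- The T-tetromino `T_2`. -/
def T2 : Set Cell := {(0, 0), (1, 0), (2, 0), (1, 1)}

/-- The 2×2 square tetromino `C_2`. -/
def C2 : Set Cell := {(0, 0), (1, 0), (0, 1), (1, 1)}

/-- The S-tetromino `Z_2`. -/
def Z2 : Set Cell := {(0, 0), (1, 0), (1, 1), (2, 1)}

/-- `C_n`: a horizontal row of `n` cells plus the cells above its two end cells. -/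
def Cpoly (n : ℕ) : Set Cell :=
  {p | 0 ≤ p.1 ∧ p.1 < (n : ℤ) ∧ p.2 = 0} ∪ {(0, 1), ((n : ℤ) - 1, 1)}

/-- `Z_n`: a horizontal row of `n` cells plus the cell above one end cell and the cell
below the other end cell. -/
def Zpoly (n : ℕ) : Set Cell :=
  {p | 0 ≤ p.1 ∧ p.1 < (n : ℤ) ∧ p.2 = 0} ∪ {(0, 1), ((n : ℤ) - 1, -1)}

/-- A polyomino is skinny if all its cells lie in one row or one column. -/
def Skinny (P : Set Cell) : Prop :=
  (∃ r, ∀ p ∈ P, p.2 = r) ∨ (∃ c, ∀ p ∈ P, p.1 = c)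

/-- A 2-paving: an irreflexive symmetric relation on cells in which every cell is
related to at most two other cells. -/
def TwoPaving (R : Cell → Cell → Prop) : Prop :=
  (∀ a, ¬ R a a) ∧ (∀ a b, R a b → R b a) ∧
  ∀ a, ∃ b c, ∀ d, R a d → d = b ∨ d = c

/-- The paving strategy based on `R`: a legal breaker strategy that marks every currently
unmarked cell related by `R` to the maker's last move. -/
def PavingStrategy (R : Cell → Cell → Prop) (τ : BStrategy) : Prop :=
  BLegal τ ∧ ∀ ms bs, ∀ last ∈ ms.getLast?, ∀ c, R last c →
    c ∉ markedCells ms bs → (c = (τ ms bs).1 ∨ c = (τ ms bs).2)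

/-- `Q` is killed by `R`: every subset of ℤ² congruent to `Q` contains two related cells. -/
def Killed (R : Cell → Cell → Prop) (Q : Set Cell) : Prop :=
  ∀ S : Set Cell, CellCongruent Q S → ∃ a ∈ S, ∃ b ∈ S, R a b

/-- The unbounded team `W = {S_∞, T_2} ∪ {C_n : n ≥ 2} ∪ {Z_n : n ≥ 2}`. -/
def Wteam : Set (Set Cell) :=
  {Sinf, T2} ∪ {P | ∃ n, 2 ≤ n ∧ P = Cpoly n} ∪ {P | ∃ n, 2 ≤ n ∧ P = Zpoly n}

lemma marked_finite (ms : List Cell) (bs : List (Cell × Cell)) :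
    (markedCells ms bs).Finite := by
  have hsub : markedCells ms bs ⊆
      {c | c ∈ ms ++ bs.map Prod.fst ++ bs.map Prod.snd} := by
    rintro c (h | ⟨p, hp, h | h⟩) <;> simp only [Set.mem_setOf_eq, List.mem_append,
      List.mem_map]
    · exact Or.inl (Or.inl h)
    · exact Or.inl (Or.inr ⟨p, hp, h.symm⟩)
    · exact Or.inr ⟨p, hp, h.symm⟩
  exact (List.finite_toSet _).subset hsub

lemma exists_fresh (M : Set Cell) (h : M.Finite) : ∃ c, c ∉ M :=
  h.infinite_compl.nonempty

lemma exists_pair (R : Cell → Cell → Prop) (hR : TwoPaving R)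
    (ms : List Cell) (bs : List (Cell × Cell)) :
    ∃ p : Cell × Cell, p.1 ≠ p.2 ∧ p.1 ∉ markedCells ms bs ∧ p.2 ∉ markedCells ms bs ∧
      ∀ last ∈ ms.getLast?, ∀ c, R last c → c ∉ markedCells ms bs →
        (c = p.1 ∨ c = p.2) := by
  set M := markedCells ms bs with hM
  have hfin : M.Finite := marked_finite ms bs
  cases hlast : ms.getLast? with
  | none =>
      obtain ⟨x, hx⟩ := exists_fresh M hfin
      obtain ⟨y, hy⟩ := exists_fresh (M ∪ {x}) (hfin.union (Set.finite_singleton x))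
      refine ⟨(x, y), ?_, hx, fun h => hy (Or.inl h), ?_⟩
      · show x ≠ y
        rintro rfl; exact hy (Or.inr rfl)
      · intro last hl; simp at hl
  | some l =>
      obtain ⟨b, c, hbc⟩ := hR.2.2 l
      by_cases h1 : R l b ∧ b ∉ M ∧ R l c ∧ c ∉ M ∧ b ≠ c
      · refine ⟨(b, c), h1.2.2.2.2, h1.2.1, h1.2.2.2.1, ?_⟩
        intro last hl d hRd _
        simp only [Option.mem_def, Option.some.injEq] at hl; subst hl
        exact hbc d hRd
      · have key : ∃ x, (∀ d, R l d → d ∉ M → d = x) := by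
          by_cases hb : R l b ∧ b ∉ M
          · refine ⟨b, fun d hd hdM => ?_⟩
            rcases hbc d hd with rfl | rfl
            · rfl
            · by_contra hne
              exact h1 ⟨hb.1, hb.2, hd, hdM, fun h => hne h.symm⟩
          · refine ⟨c, fun d hd hdM => ?_⟩
            rcases hbc d hd with rfl | rfl
            · exact absurd ⟨hd, hdM⟩ hb
            · rfl
        obtain ⟨x, hx⟩ := key
        by_cases hxU : R l x ∧ x ∉ M
        · obtain ⟨y, hy⟩ := exists_fresh (M ∪ {x}) (hfin.union (Set.finite_singleton x))
          refine ⟨(x, y), ?_, hxU.2, fun h => hy (Or.inl h), ?_⟩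
          · show x ≠ y
            rintro rfl; exact hy (Or.inr rfl)
          · intro last hl d hRd hdM
            simp only [Option.mem_def, Option.some.injEq] at hl; subst hl
            exact Or.inl (hx d hRd hdM)
        · obtain ⟨u, hu⟩ := exists_fresh M hfin
          obtain ⟨v, hv⟩ := exists_fresh (M ∪ {u}) (hfin.union (Set.finite_singleton u))
          refine ⟨(u, v), ?_, hu, fun h => hv (Or.inl h), ?_⟩
          · show u ≠ v
            rintro rfl; exact hv (Or.inr rfl)
          · intro last hl d hRd hdM
            simp only [Option.mem_def, Option.some.injEq] at hl; subst hl
            have hdx := hx d hRd hdM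
            subst hdx
            exact absurd ⟨hRd, hdM⟩ hxU

noncomputable def pavingτ (R : Cell → Cell → Prop) (hR : TwoPaving R) : BStrategy :=
  fun ms bs => Classical.choose (exists_pair R hR ms bs)

lemma pavingτ_spec (R : Cell → Cell → Prop) (hR : TwoPaving R) :
    PavingStrategy R (pavingτ R hR) := by
  constructor
  · intro ms bs
    obtain ⟨h1, h2, h3, _⟩ := Classical.choose_spec (exists_pair R hR ms bs)
    exact ⟨h1, h2, h3⟩
  · intro ms bs last hl c hRc hc
    exact (Classical.choose_spec (exists_pair R hR ms bs)).2.2.2 last hl c hRc hc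

lemma mem_marked_concat (c mv : Cell) (ms : List Cell) (bs : List (Cell × Cell)) :
    c ∈ markedCells (ms ++ [mv]) bs ↔ c ∈ markedCells ms bs ∨ c = mv := by
  constructor
  · rintro (h | h)
    · rcases List.mem_append.mp h with h | h
      · exact Or.inl (Or.inl h)
      · exact Or.inr (List.mem_singleton.mp h)
    · exact Or.inl (Or.inr h)
  · rintro (h | rfl)
    · rcases h with h | h
      · exact Or.inl (List.mem_append.mpr (Or.inl h))
      · exact Or.inr h
    · exact Or.inl (List.mem_append.mpr (Or.inr (List.mem_singleton_self _)))

lemma marked_sub (mv : Cell) (t : Cell × Cell) (ms : List Cell)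
    (bs : List (Cell × Cell)) :
    markedCells ms bs ⊆ markedCells (ms ++ [mv]) (bs ++ [t]) := by
  rintro c (h | ⟨p, hp, h⟩)
  · exact Or.inl (List.mem_append.mpr (Or.inl h))
  · exact Or.inr ⟨p, List.mem_append.mpr (Or.inl hp), h⟩

lemma paving_invariant (R : Cell → Cell → Prop) (hR : TwoPaving R) (τ : BStrategy)
    (hτ : PavingStrategy R τ) (σ : MStrategy) (hσ : MLegal σ) (n : ℕ) :
    (∀ a ∈ (play σ τ n).1, ∀ b ∈ (play σ τ n).1, ¬ R a b) ∧
      (∀ a ∈ (play σ τ n).1, ∀ c, R a c → c ∈ markedCells (play σ τ n).1 (play σ τ n).2) := by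
  induction n with
  | zero => simp [play, markedCells]
  | succ n ih =>
    obtain ⟨ih1, ih2⟩ := ih
    set ms := (play σ τ n).1 with hms
    set bs := (play σ τ n).2 with hbs
    set mv := σ ms bs with hmv
    set t := τ (ms ++ [mv]) bs with ht
    have hplay : play σ τ (n + 1) = (ms ++ [mv], bs ++ [t]) := rfl
    have hleg : mv ∉ markedCells ms bs := hσ ms bs
    have hsub := marked_sub mv t ms bs
    have part2 : ∀ a ∈ ms ++ [mv], ∀ c, R a c →
        c ∈ markedCells (ms ++ [mv]) (bs ++ [t]) := by
      intro a ha c hRc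
      rcases List.mem_append.mp ha with ha | ha
      · exact hsub (ih2 a ha c hRc)
      · have haeq : a = mv := by simpa using ha
        subst haeq
        by_cases hc : c ∈ markedCells ms bs
        · exact hsub hc
        · have hcmv : c ≠ mv := by
            intro h; subst h; exact hR.1 _ hRc
          have hcnot : c ∉ markedCells (ms ++ [mv]) bs := by
            rw [mem_marked_concat]; tauto
          have hlast : mv ∈ (ms ++ [mv]).getLast? := by
            simp [List.getLast?_concat]
          have htmem : t ∈ bs ++ [t] := List.mem_append.mpr (Or.inr (List.mem_singleton_self t))
          rcases hτ.2 (ms ++ [mv]) bs mv hlast c hRc hcnot with h | h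
          · exact Or.inr ⟨t, htmem, Or.inl h⟩
          · exact Or.inr ⟨t, htmem, Or.inr h⟩
    have part1 : ∀ a ∈ ms ++ [mv], ∀ b ∈ ms ++ [mv], ¬ R a b := by
      intro a ha b hb hab
      rcases List.mem_append.mp ha with ha | ha <;>
        rcases List.mem_append.mp hb with hb | hb
      · exact ih1 a ha b hb hab
      · have : b = mv := by simpa using hb
        subst this
        exact hleg (ih2 a ha mv hab)
      · have : a = mv := by simpa using ha
        subst this
        exact hleg (ih2 b hb mv (hR.2.1 _ _ hab))
      · have h1 : a = mv := by simpa using ha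
        have h2 : b = mv := by simpa using hb
        subst h1; subst h2
        exact hR.1 mv hab
    rw [hplay]
    exact ⟨part1, part2⟩

/-- a bounded set of polyominoes killed by a 2-paving `R` is a loser;
the breaker wins with the paving strategy based on `R`. -/
theorem stmt8 (F : Set (Set Cell)) (hpoly : ∀ P ∈ F, IsPolyomino P) (hb : Bounded F)
    (R : Cell → Cell → Prop) (hR : TwoPaving R) (hk : ∀ Q ∈ F, Killed R Q) :
    ¬ GameWinner F ∧ ∀ τ, PavingStrategy R τ → ∀ σ, MLegal σ → ¬ Achieves F σ τ := by
  have blocks : ∀ τ, PavingStrategy R τ → ∀ σ, MLegal σ → ¬ Achieves F σ τ := by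
    rintro τ hτ σ hσ ⟨n, Q, hQ, S, hSsub, hcong⟩
    obtain ⟨a, haS, b, hbS, hab⟩ := hk Q hQ S hcong
    exact (paving_invariant R hR τ hτ σ hσ n).1 a (hSsub haS) b (hSsub hbS) hab
  refine ⟨?_, blocks⟩
  rintro ⟨σ, hσ, hall⟩
  exact blocks (pavingτ R hR) (pavingτ_spec R hR) σ hσ
    (hall (pavingτ R hR) (pavingτ_spec R hR).1)
end

section
/- There is a losing team of every size: for each positive integer s, the team {C_2, C_3, …, C_{s+1}} (which has exactly s elements) is a loser, and the infinite team {C_n : n ≥ 2} is a loser. Indeed, there is a single 2-paving that kills every C_n with n ≥ 2. -/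
section Aux

/-- The 2-paving: adjacent cells `a`, `a+(1,0)` and `a`, `a+(0,1)` are related
whenever the coordinate sum of `a` is even. -/
def Rpav : Cell → Cell → Prop := fun p q =>
  ((p.1 + p.2) % 2 = 0 ∧ (q = (p.1 + 1, p.2) ∨ q = (p.1, p.2 + 1))) ∨
  ((q.1 + q.2) % 2 = 0 ∧ (p = (q.1 + 1, q.2) ∨ p = (q.1, q.2 + 1)))

lemma rpav_symm {x y : Cell} (h : Rpav x y) : Rpav y x := by
  rcases h with h | h
  · exact Or.inr h
  · exact Or.inl h

lemma rpav_irrefl (x : Cell) : ¬ Rpav x x := by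
  intro h; simp [Rpav, Prod.ext_iff] at h

lemma rpav_twoPaving : TwoPaving Rpav := by
  refine ⟨rpav_irrefl, fun a b h => rpav_symm h, ?_⟩
  intro a
  by_cases hp : (a.1 + a.2) % 2 = 0
  · exact ⟨(a.1 + 1, a.2), (a.1, a.2 + 1), by
      intro d hd; simp [Rpav, Prod.ext_iff] at hd ⊢; omega⟩
  · exact ⟨(a.1 - 1, a.2), (a.1, a.2 - 1), by
      intro d hd; simp [Rpav, Prod.ext_iff] at hd ⊢; omega⟩

lemma rpav_kills (n : ℕ) (hn : 2 ≤ n) : Killed Rpav (Cpoly n) := by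
  rintro S ⟨f, ⟨t, a, b, s, hf⟩, rfl⟩
  rcases Nat.lt_or_ge n 3 with h3 | h3
  · have hn2 : n = 2 := by omega
    subst hn2
    have m1 : ((0, 0) : Cell) ∈ Cpoly 2 := by simp [Cpoly]
    have m2 : ((1, 0) : Cell) ∈ Cpoly 2 := by simp [Cpoly]
    have m3 : ((0, 1) : Cell) ∈ Cpoly 2 := by simp [Cpoly]
    have m4 : ((1, 1) : Cell) ∈ Cpoly 2 := by norm_num [Cpoly]
    have key : Rpav (f (0, 0)) (f (1, 0)) ∨ Rpav (f (0, 1)) (f (1, 1)) := by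
      rw [hf (0, 0), hf (1, 0), hf (0, 1), hf (1, 1)]
      rcases a <;> rcases b <;> rcases s <;> simp [Rpav, Prod.ext_iff] <;> omega
    rcases key with key | key
    · exact ⟨f (0, 0), ⟨_, m1, rfl⟩, f (1, 0), ⟨_, m2, rfl⟩, key⟩
    · exact ⟨f (0, 1), ⟨_, m3, rfl⟩, f (1, 1), ⟨_, m4, rfl⟩, key⟩
  · have m1 : ((0, 0) : Cell) ∈ Cpoly n := by simp [Cpoly]; omega
    have m2 : ((1, 0) : Cell) ∈ Cpoly n := by simp [Cpoly]; omega
    have m3 : ((2, 0) : Cell) ∈ Cpoly n := by simp [Cpoly]; omega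
    have key : Rpav (f (0, 0)) (f (1, 0)) ∨ Rpav (f (1, 0)) (f (2, 0)) := by
      rw [hf (0, 0), hf (1, 0), hf (2, 0)]
      rcases a <;> rcases b <;> rcases s <;> simp [Rpav, Prod.ext_iff] <;> omega
    rcases key with key | key
    · exact ⟨f (0, 0), ⟨_, m1, rfl⟩, f (1, 0), ⟨_, m2, rfl⟩, key⟩
    · exact ⟨f (1, 0), ⟨_, m2, rfl⟩, f (2, 0), ⟨_, m3, rfl⟩, key⟩

lemma cpoly_no_anc (m n : ℕ) (hm : 2 ≤ m) (hn : 2 ≤ n) (hne : m ≠ n) :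
    ¬ Ancestor (Cpoly m) (Cpoly n) := by
  rintro ⟨S, hSsub, f, ⟨t, a, b, s, hf⟩, him⟩
  have himg : ∀ x ∈ Cpoly m, f x ∈ Cpoly n := by
    intro x hx
    exact hSsub (him ▸ ⟨x, hx, rfl⟩)
  have c1 : ((0, 0) : Cell) ∈ Cpoly m := by simp [Cpoly]; omega
  have c2 : ((1, 0) : Cell) ∈ Cpoly m := by simp [Cpoly]; omega
  have c3 : (((m : ℤ) - 1, 0) : Cell) ∈ Cpoly m := by simp [Cpoly]; omega
  have c4 : ((0, 1) : Cell) ∈ Cpoly m := by simp [Cpoly]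
  have c5 : (((m : ℤ) - 1, 1) : Cell) ∈ Cpoly m := by simp [Cpoly]
  have h1 := himg _ c1; have h2 := himg _ c2; have h3 := himg _ c3
  have h4 := himg _ c4; have h5 := himg _ c5
  rw [hf] at h1 h2 h3 h4 h5
  rcases a <;> rcases b <;> rcases s <;>
    simp [Cpoly, Prod.ext_iff] at h1 h2 h3 h4 h5 <;> omega

lemma cpoly_inj (m n : ℕ) (hm : 2 ≤ m) (hn : 2 ≤ n) (h : Cpoly m = Cpoly n) : m = n := by
  by_contra hne
  rcases Nat.lt_or_ge m n with hlt | hge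
  · have : (((n : ℤ) - 1, 0) : Cell) ∈ Cpoly n := by simp [Cpoly]; omega
    rw [← h] at this
    simp [Cpoly, Prod.ext_iff] at this
    omega
  · have : (((m : ℤ) - 1, 0) : Cell) ∈ Cpoly m := by simp [Cpoly]; omega
    rw [h] at this
    simp [Cpoly, Prod.ext_iff] at this
    omega

lemma adj_symm {x y : Cell} (h : Adjacent x y) : Adjacent y x := by
  simp [Adjacent] at h ⊢; omega

lemma cpoly_poly (n : ℕ) (hn : 2 ≤ n) : IsPolyomino (Cpoly n) := by
  set P := Cpoly n with hP
  set step := fun x y : Cell => x ∈ P ∧ y ∈ P ∧ Adjacent x y with hstep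
  have hsym : Symmetric step := by
    rintro x y ⟨h1, h2, h3⟩; exact ⟨h2, h1, adj_symm h3⟩
  have rowmem : ∀ x : ℤ, 0 ≤ x → x < (n : ℤ) → ((x, 0) : Cell) ∈ P := by
    intro x h1 h2; simp [hP, Cpoly]; omega
  have aux : ∀ j : ℕ, (j : ℤ) < (n : ℤ) →
      Relation.ReflTransGen step ((j : ℤ), 0) ((0 : ℤ), 0) := by
    intro j
    induction j with
    | zero => intro _; exact Relation.ReflTransGen.refl
    | succ k ih =>
      intro hj
      have hk : (k : ℤ) < (n : ℤ) := by push_cast at hj ⊢; omega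
      refine Relation.ReflTransGen.head ⟨?_, ?_, ?_⟩ (ih hk)
      · exact rowmem _ (by positivity) (by push_cast at hj ⊢; omega)
      · exact rowmem _ (by positivity) hk
      · simp only [Adjacent]; push_cast; omega
  have toorigin : ∀ c ∈ P, Relation.ReflTransGen step c ((0 : ℤ), 0) := by
    rintro ⟨x, y⟩ hc
    rcases hc with ⟨hx0, hxn, hy⟩ | hc
    · simp only at hx0 hxn hy
      subst hy
      have := aux x.toNat (by rw [Int.toNat_of_nonneg hx0]; exact hxn)
      rwa [Int.toNat_of_nonneg hx0] at this
    · rcases hc with hc | hc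
      · rw [hc]
        refine Relation.ReflTransGen.single ⟨?_, ?_, ?_⟩
        · simp [hP, Cpoly]
        · exact rowmem 0 le_rfl (by omega)
        · simp [Adjacent]
      · simp only [Set.mem_singleton_iff] at hc
        rw [hc]
        refine Relation.ReflTransGen.head (b := (((n : ℤ) - 1, 0) : Cell)) ⟨?_, ?_, ?_⟩ ?_
        · simp [hP, Cpoly]
        · exact rowmem _ (by omega) (by omega)
        · simp [Adjacent]
        · have := aux ((n : ℤ) - 1).toNat (by rw [Int.toNat_of_nonneg (by omega)]; omega)
          rwa [Int.toNat_of_nonneg (by omega)] at this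
  refine ⟨⟨((0, 0) : Cell), rowmem 0 le_rfl (by omega)⟩, ?_⟩
  intro p hp q hq
  exact (toorigin p hp).trans ((haveI : Std.Symm step := ⟨fun a b h => hsym h⟩; Relation.ReflTransGen.stdSymm (r := step)).symm _ _ (toorigin q hq))

/-! ### The paving breaker strategy -/

def allMarked (ms : List Cell) (bs : List (Cell × Cell)) : List Cell :=
  ms ++ bs.flatMap (fun p => [p.1, p.2])

lemma mem_allMarked {c : Cell} {ms bs} : c ∈ allMarked ms bs ↔ c ∈ markedCells ms bs := by
  simp [allMarked, markedCells, List.mem_flatMap]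

def partnersOf (c : Cell) : List Cell :=
  if (c.1 + c.2) % 2 = 0 then [(c.1 + 1, c.2), (c.1, c.2 + 1)]
  else [(c.1 - 1, c.2), (c.1, c.2 - 1)]

lemma mem_partnersOf {l c : Cell} (h : Rpav l c) : c ∈ partnersOf l := by
  by_cases hp : (l.1 + l.2) % 2 = 0 <;>
    simp [partnersOf, hp, Rpav, Prod.ext_iff] at h ⊢ <;> omega

lemma partnersOf_nodup (l : Cell) : (partnersOf l).Nodup := by
  by_cases hp : (l.1 + l.2) % 2 = 0 <;> simp [partnersOf, hp, Prod.ext_iff]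

lemma partnersOf_length (l : Cell) : (partnersOf l).length = 2 := by
  by_cases hp : (l.1 + l.2) % 2 = 0 <;> simp [partnersOf, hp]

def freshX (L : List Cell) : ℤ := L.foldr (fun c x => max c.1 x) 0 + 1

lemma lt_freshX {L : List Cell} : ∀ c ∈ L, c.1 < freshX L := by
  unfold freshX
  induction L with
  | nil => simp
  | cons d L ih =>
    intro c hc
    rcases List.mem_cons.1 hc with rfl | hc
    · simp
    · have := ih c hc; simp at this ⊢; omega

lemma freshX_notmem {L : List Cell} (z : ℤ) (hz : 0 ≤ z) : ((freshX L + z, 0) : Cell) ∉ L := by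
  intro h
  have := lt_freshX _ h
  simp at this
  omega

def cnd (ms : List Cell) (bs : List (Cell × Cell)) : List Cell :=
  (ms.getLast?.elim [] partnersOf).filter (fun c => decide (c ∉ allMarked ms bs))

lemma cnd_len (ms bs) : (cnd ms bs).length ≤ 2 := by
  unfold cnd
  refine le_trans (List.length_filter_le _ _) ?_
  cases h : ms.getLast? with
  | none => simp
  | some l => simp [partnersOf_length]

lemma cnd_nodup (ms bs) : (cnd ms bs).Nodup := by
  unfold cnd
  cases h : ms.getLast? with
  | none => simp
  | some l => exact (partnersOf_nodup l).filter _

lemma cnd_unmarked {ms bs} : ∀ c ∈ cnd ms bs, c ∉ markedCells ms bs := by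
  intro c hc
  unfold cnd at hc
  rw [List.mem_filter] at hc
  have := hc.2
  simp at this
  rwa [← mem_allMarked]

/-- The breaker's paving strategy for `Rpav`. -/
def tauR : BStrategy := fun ms bs =>
  match cnd ms bs with
  | [p, q] => (p, q)
  | [p] => (p, if p = ((freshX (allMarked ms bs), 0) : Cell)
      then (freshX (allMarked ms bs) + 1, 0) else (freshX (allMarked ms bs), 0))
  | _ => ((freshX (allMarked ms bs), 0), (freshX (allMarked ms bs) + 1, 0))

lemma fresh_unmarked {ms bs} (z : ℤ) (hz : 0 ≤ z) :
    ((freshX (allMarked ms bs) + z, 0) : Cell) ∉ markedCells ms bs := by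
  rw [← mem_allMarked]
  exact freshX_notmem z hz

lemma fresh_unmarked0 {ms bs} :
    ((freshX (allMarked ms bs), 0) : Cell) ∉ markedCells ms bs := by
  have := @fresh_unmarked ms bs 0 le_rfl
  simpa using this

lemma fresh_unmarked1 {ms bs} :
    ((freshX (allMarked ms bs) + 1, 0) : Cell) ∉ markedCells ms bs :=
  fresh_unmarked 1 zero_le_one

lemma tauR_legal : BLegal tauR := by
  intro ms bs
  have hnd := cnd_nodup ms bs
  have hum := @cnd_unmarked ms bs
  rcases h : cnd ms bs with _ | ⟨p, _ | ⟨q, rest⟩⟩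
  · simp only [tauR, h]
    refine ⟨?_, fresh_unmarked0, fresh_unmarked1⟩
    simp [Prod.ext_iff]
  · simp only [tauR, h]
    have hp : p ∉ markedCells ms bs := hum p (h ▸ List.mem_singleton_self p)
    constructor
    · split <;> rename_i hif
      · rw [hif]; simp [Prod.ext_iff]
      · exact hif
    constructor
    · exact hp
    · split
      · exact fresh_unmarked1
      · exact fresh_unmarked0
  · have hlen := cnd_len ms bs
    rw [h] at hlen
    simp at hlen
    have hrest : rest = [] := by
      cases rest with
      | nil => rfl
      | cons a t => simp at hlen
    subst hrest
    simp only [tauR, h]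
    rw [h] at hnd
    have hpq : p ≠ q := by simp at hnd; exact hnd
    refine ⟨hpq, ?_, ?_⟩
    · exact hum p (h ▸ (by simp))
    · exact hum q (h ▸ (by simp))

lemma tauR_cover {ms bs l} (hlast : ms.getLast? = some l) :
    ∀ c, Rpav l c → c ∉ markedCells ms bs →
      c = (tauR ms bs).1 ∨ c = (tauR ms bs).2 := by
  intro c hR hcm
  have hc : c ∈ cnd ms bs := by
    unfold cnd
    rw [hlast]
    simp only [Option.elim]
    rw [List.mem_filter]
    refine ⟨mem_partnersOf hR, ?_⟩
    simp
    rwa [← mem_allMarked] at hcm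
  have hlen := cnd_len ms bs
  rcases h : cnd ms bs with _ | ⟨p, _ | ⟨q, rest⟩⟩
  · rw [h] at hc; simp at hc
  · rw [h] at hc; simp at hc
    simp only [tauR, h]
    exact Or.inl hc
  · rw [h] at hlen
    simp at hlen
    have hrest : rest = [] := by
      cases rest with
      | nil => rfl
      | cons a t => simp at hlen
    subst hrest
    rw [h] at hc
    simp only [tauR, h]
    simp at hc
    rcases hc with rfl | rfl
    · exact Or.inl rfl
    · exact Or.inr rfl

lemma marked_mono1 {ms bs} (m : Cell) :
    markedCells ms bs ⊆ markedCells (ms ++ [m]) bs := by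
  rintro c (hc | h)
  · exact Or.inl (List.mem_append_left _ hc)
  · exact Or.inr h

lemma marked_mono2 {ms bs} (t : Cell × Cell) :
    markedCells ms bs ⊆ markedCells ms (bs ++ [t]) := by
  rintro c (hc | ⟨p, hp, hcp⟩)
  · exact Or.inl hc
  · exact Or.inr ⟨p, List.mem_append_left _ hp, hcp⟩

lemma mem_marked_snd {ms bs} (t : Cell × Cell) {c : Cell} (h : c = t.1 ∨ c = t.2) :
    c ∈ markedCells ms (bs ++ [t]) :=
  Or.inr ⟨t, List.mem_append_right _ (List.mem_singleton_self t), h⟩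

lemma inv2 (σ : MStrategy) :
    ∀ n, ∀ x ∈ (play σ tauR n).1, ∀ c, Rpav x c →
      c ∈ markedCells (play σ tauR n).1 (play σ tauR n).2 := by
  intro n
  induction n with
  | zero => intro x hx; simp [play] at hx
  | succ k ih =>
    intro x hx c hR
    simp only [play] at hx ⊢
    rcases List.mem_append.1 hx with hx | hx
    · exact marked_mono2 _ (marked_mono1 _ (ih x hx c hR))
    · simp only [List.mem_singleton] at hx
      subst hx
      by_cases hc : c ∈ markedCells
          ((play σ tauR k).1 ++ [σ (play σ tauR k).1 (play σ tauR k).2])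
          (play σ tauR k).2
      · exact marked_mono2 _ hc
      · have hcov := tauR_cover
          (ms := (play σ tauR k).1 ++ [σ (play σ tauR k).1 (play σ tauR k).2])
          (bs := (play σ tauR k).2)
          List.getLast?_concat c hR hc
        exact mem_marked_snd _ hcov

lemma maker_indep (σ : MStrategy) (hσ : MLegal σ) :
    ∀ n, ∀ x ∈ (play σ tauR n).1, ∀ y ∈ (play σ tauR n).1, ¬ Rpav x y := by
  intro n
  induction n with
  | zero => intro x hx; simp [play] at hx
  | succ k ih =>
    intro x hx y hy hR
    simp only [play, List.mem_append, List.mem_singleton] at hx hy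
    rcases hx with hx | hx <;> rcases hy with hy | hy
    · exact ih x hx y hy hR
    · subst hy
      exact hσ _ _ (inv2 σ k x hx _ hR)
    · subst hx
      exact hσ _ _ (inv2 σ k y hy _ (rpav_symm hR))
    · subst hx; subst hy
      exact rpav_irrefl _ hR

lemma cpoly_breaker (F : Set (Set Cell)) (hF : ∀ Q ∈ F, ∃ k, 2 ≤ k ∧ Q = Cpoly k) :
    ¬ GameWinner F := by
  rintro ⟨σ, hσ, hwin⟩
  obtain ⟨n, Q, hQ, S, hSsub, hcong⟩ := hwin tauR tauR_legal
  obtain ⟨k, hk, rfl⟩ := hF Q hQ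
  obtain ⟨x, hxS, y, hyS, hR⟩ := rpav_kills k hk S hcong
  exact maker_indep σ hσ n x (hSsub hxS) y (hSsub hyS) hR

lemma cpoly_team (F : Set (Set Cell)) (hF : ∀ Q ∈ F, ∃ k, 2 ≤ k ∧ Q = Cpoly k) :
    IsTeam F := by
  constructor
  · intro P hP
    obtain ⟨k, hk, rfl⟩ := hF P hP
    exact cpoly_poly k hk
  · intro P hP Q hQ hne
    obtain ⟨m, hm, rfl⟩ := hF P hP
    obtain ⟨n, hn, rfl⟩ := hF Q hQ
    exact cpoly_no_anc m n hm hn (fun h => hne (by rw [h]))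

end Aux

/-- there is a losing team of every size: for each `s ≥ 1` the team
`{C_2, …, C_{s+1}}` has exactly `s` elements and is a loser, the infinite team
`{C_n : n ≥ 2}` is a loser, and a single 2-paving kills every `C_n` with `n ≥ 2`. -/
theorem stmt9 :
    (∀ s : ℕ, 1 ≤ s →
      IsTeam {P | ∃ n, 2 ≤ n ∧ n ≤ s + 1 ∧ P = Cpoly n} ∧
      Set.encard {P | ∃ n, 2 ≤ n ∧ n ≤ s + 1 ∧ P = Cpoly n} = (s : ℕ∞) ∧
      ¬ GameWinner {P | ∃ n, 2 ≤ n ∧ n ≤ s + 1 ∧ P = Cpoly n}) ∧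
    (IsTeam {P | ∃ n, 2 ≤ n ∧ P = Cpoly n} ∧
      ¬ GameWinner {P | ∃ n, 2 ≤ n ∧ P = Cpoly n}) ∧
    (∃ R, TwoPaving R ∧ ∀ n, 2 ≤ n → Killed R (Cpoly n)) := by
  refine ⟨?_, ⟨?_, ?_⟩, ⟨Rpav, rpav_twoPaving, rpav_kills⟩⟩
  · intro s hs
    refine ⟨cpoly_team _ ?_, ?_, cpoly_breaker _ ?_⟩
    · rintro Q ⟨k, h1, h2, rfl⟩; exact ⟨k, h1, rfl⟩
    · have hset : {P | ∃ n, 2 ≤ n ∧ n ≤ s + 1 ∧ P = Cpoly n}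
          = Cpoly '' (Set.Icc 2 (s + 1)) := by
        ext P
        constructor
        · rintro ⟨n, h1, h2, rfl⟩; exact ⟨n, ⟨h1, h2⟩, rfl⟩
        · rintro ⟨n, ⟨h1, h2⟩, rfl⟩; exact ⟨n, h1, h2, rfl⟩
      rw [hset]
      have hinj : Set.InjOn Cpoly (Set.Icc 2 (s + 1)) := by
        intro a ha b hb h
        exact cpoly_inj a b ha.1 hb.1 h
      rw [hinj.encard_image, ← Finset.coe_Icc, Set.encard_coe_eq_coe_finsetCard,
        Nat.card_Icc]
      have h2 : s + 1 + 1 - 2 = s := by omega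
      rw [h2]
    · rintro Q ⟨k, h1, h2, rfl⟩; exact ⟨k, h1, rfl⟩
  · exact cpoly_team _ (fun Q hQ => hQ)
  · exact cpoly_breaker _ (fun Q hQ => hQ)
end

section
/- Every polyomino with at least 3 cells either is skinny (all of its cells lie in a single row or a single column of ℤ²) or contains a subset congruent to the L-tromino L_2. -/
/-- every polyomino with at least 3 cells is skinny or contains a subset
congruent to the L-tromino `L_2`. -/
theorem stmt11 (P : Set Cell) (hP : IsPolyomino P) (h3 : 3 ≤ P.encard) :
    Skinny P ∨ Ancestor L2 P := by
  by_cases hs : Skinny P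
  · exact Or.inl hs
  right
  obtain ⟨⟨p0, hp0⟩, hconn⟩ := hP
  set rel : Cell → Cell → Prop := fun x y => x ∈ P ∧ y ∈ P ∧ Adjacent x y with hrel
  rw [Skinny, not_or] at hs
  obtain ⟨hs1, hs2⟩ := hs
  push_neg at hs1 hs2
  obtain ⟨q, hq, hq2⟩ := hs1 p0.2
  obtain ⟨r, hr, hr2⟩ := hs2 p0.1
  -- a horizontal edge exists along any walk changing column
  have hedge : ∀ a b : Cell, Relation.ReflTransGen rel a b →
      a.1 = b.1 ∨ ∃ x y : Cell, rel x y ∧ x.2 = y.2 := by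
    intro a b h
    induction h with
    | refl => exact Or.inl rfl
    | @tail b c h e ih =>
      rcases ih with ih | ih
      · by_cases h1 : b.1 = c.1
        · exact Or.inl (ih.trans h1)
        · refine Or.inr ⟨b, c, e, ?_⟩
          have hadj := e.2.2
          unfold Adjacent at hadj
          omega
      · exact Or.inr ih
  -- a vertical edge exists along any walk changing row
  have vedge : ∀ a b : Cell, Relation.ReflTransGen rel a b →
      a.2 = b.2 ∨ ∃ x y : Cell, rel x y ∧ x.1 = y.1 := by
    intro a b h
    induction h with
    | refl => exact Or.inl rfl
    | @tail b c h e ih =>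
      rcases ih with ih | ih
      · by_cases h1 : b.2 = c.2
        · exact Or.inl (ih.trans h1)
        · refine Or.inr ⟨b, c, e, ?_⟩
          have hadj := e.2.2
          unfold Adjacent at hadj
          omega
      · exact Or.inr ih
  -- propagate a horizontal edge along a walk to find a bend
  have bendlem : ∀ a b : Cell, Relation.ReflTransGen rel a b →
      (∃ a', rel a' a ∧ a'.2 = a.2) →
      (∃ y x z : Cell, rel x y ∧ rel y z ∧ x.2 = y.2 ∧ y.1 = z.1) ∨
      (∃ b', rel b' b ∧ b'.2 = b.2) := by
    intro a b h
    induction h with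
    | refl => exact fun ha => Or.inr ha
    | @tail b c h e ih =>
      intro ha
      rcases ih ha with hb | ⟨b', hb', hb2⟩
      · exact Or.inl hb
      · by_cases h1 : b.2 = c.2
        · exact Or.inr ⟨b, e, h1⟩
        · have hadj := e.2.2
          have h2 : b.1 = c.1 := by unfold Adjacent at hadj; omega
          exact Or.inl ⟨b, b', c, hb', e, hb2, h2⟩
  obtain ⟨x0, y0, hxy0, hxy0e⟩ :=
    (hedge p0 r (hconn p0 hp0 r hr)).resolve_left (fun h => hr2 h.symm)
  obtain ⟨u0, v0, huv0, huv0e⟩ :=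
    (vedge p0 q (hconn p0 hp0 q hq)).resolve_left (fun h => hq2 h.symm)
  have walk : Relation.ReflTransGen rel y0 u0 := hconn y0 hxy0.2.1 u0 huv0.1
  have hb : ∃ y x z : Cell, rel x y ∧ rel y z ∧ x.2 = y.2 ∧ y.1 = z.1 := by
    rcases bendlem y0 u0 walk ⟨x0, hxy0, hxy0e⟩ with h | ⟨u', hu', hu2⟩
    · exact h
    · exact ⟨u0, u', v0, hu', huv0, hu2, huv0e⟩
  obtain ⟨y, x, z, hxy, hyz, hx2, hy1⟩ := hb
  have hx1 : y.1 - x.1 = 1 ∨ y.1 - x.1 = -1 := by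
    have hadj := hxy.2.2; unfold Adjacent at hadj; omega
  have hz2 : z.2 - y.2 = 1 ∨ z.2 - y.2 = -1 := by
    have hadj := hyz.2.2; unfold Adjacent at hadj; omega
  refine ⟨{x, y, z}, ?_, ?_⟩
  · intro c hc
    rcases hc with rfl | rfl | rfl
    · exact hxy.1
    · exact hxy.2.1
    · exact hyz.2.1
  · refine ⟨fun p => (x.1 + (if y.1 = x.1 + 1 then p.1 else -p.1),
        y.2 + (if z.2 = y.2 + 1 then p.2 else -p.2)), ?_, ?_⟩
    · exact ⟨(x.1, y.2), decide (y.1 = x.1 + 1), decide (z.2 = y.2 + 1), false,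
        fun p => by simp⟩
    · have h00 : (x.1 + (if y.1 = x.1 + 1 then (0:ℤ) else -(0:ℤ)),
          y.2 + (if z.2 = y.2 + 1 then (0:ℤ) else -(0:ℤ))) = x := by
        rw [Prod.ext_iff]
        constructor <;> dsimp only [] <;> split_ifs <;> omega
      have h10 : (x.1 + (if y.1 = x.1 + 1 then (1:ℤ) else -(1:ℤ)),
          y.2 + (if z.2 = y.2 + 1 then (0:ℤ) else -(0:ℤ))) = y := by
        rw [Prod.ext_iff]
        constructor <;> dsimp only [] <;> split_ifs <;> omega
      have h11 : (x.1 + (if y.1 = x.1 + 1 then (1:ℤ) else -(1:ℤ)),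
          y.2 + (if z.2 = y.2 + 1 then (1:ℤ) else -(1:ℤ))) = z := by
        rw [Prod.ext_iff]
        constructor <;> dsimp only [] <;> split_ifs <;> omega
      have hL2 : L2 = ({((0:ℤ),(0:ℤ)), ((1:ℤ),(0:ℤ)), ((1:ℤ),(1:ℤ))} : Set Cell) := rfl
      rw [hL2, Set.image_insert_eq, Set.image_insert_eq, Set.image_singleton,
        h00, h10, h11]
end

section
/- For every polyomino P, the singleton team {P} is a winner in the weak (1,2)-achievement game if and only if P has size at most 2. -/
/-! ### Auxiliary development -/

section Aux

/-- The linear part of a symmetry. -/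
def Lpart (a b s : Bool) (p : Cell) : Cell :=
  ((if a then (if s then p.2 else p.1) else -(if s then p.2 else p.1)),
   (if b then (if s then p.1 else p.2) else -(if s then p.1 else p.2)))

/-- A concrete symmetry. -/
def symF (t : Cell) (a b s : Bool) (p : Cell) : Cell :=
  (t.1 + (Lpart a b s p).1, t.2 + (Lpart a b s p).2)

lemma symF_isSym (t : Cell) (a b s : Bool) : IsSym (symF t a b s) :=
  ⟨t, a, b, s, fun _ => rfl⟩

lemma adj_symm_s14 {p q : Cell} (h : Adjacent p q) : Adjacent q p := by
  unfold Adjacent at *; omega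

lemma adj_ne {p q : Cell} (h : Adjacent p q) : p ≠ q := by
  rintro rfl; unfold Adjacent at h; omega

lemma adj_cases {p q : Cell} (h : Adjacent p q) :
    q = (p.1 + 1, p.2) ∨ q = (p.1 - 1, p.2) ∨ q = (p.1, p.2 + 1) ∨ q = (p.1, p.2 - 1) := by
  unfold Adjacent at h
  rcases p with ⟨p1, p2⟩; rcases q with ⟨q1, q2⟩
  simp only [Prod.mk.injEq] at *
  omega

lemma Lpart_add (a b s : Bool) (p q : Cell) :
    Lpart a b s (p.1 + q.1, p.2 + q.2) =
      ((Lpart a b s p).1 + (Lpart a b s q).1, (Lpart a b s p).2 + (Lpart a b s q).2) := by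
  rcases a <;> rcases b <;> rcases s <;> simp [Lpart] <;> ring_nf <;> simp [add_comm]

lemma units_map {u w : Cell}
    (h4u : u = (1,0) ∨ u = (-1,0) ∨ u = (0,1) ∨ u = (0,-1))
    (h4w : w = (1,0) ∨ w = (-1,0) ∨ w = (0,1) ∨ w = (0,-1)) :
    ∃ a b s, Lpart a b s u = w := by
  rcases h4u with rfl | rfl | rfl | rfl <;> rcases h4w with rfl | rfl | rfl | rfl <;>
    first
      | exact ⟨true, true, false, rfl⟩
      | exact ⟨false, true, false, rfl⟩
      | exact ⟨true, false, false, rfl⟩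
      | exact ⟨false, false, false, rfl⟩
      | exact ⟨true, true, true, rfl⟩
      | exact ⟨false, true, true, rfl⟩
      | exact ⟨true, false, true, rfl⟩
      | exact ⟨false, false, true, rfl⟩

lemma adj_four {p q : Cell} (h : Adjacent p q) :
    (q.1 - p.1, q.2 - p.2) = ((1:ℤ),(0:ℤ)) ∨ (q.1 - p.1, q.2 - p.2) = ((-1:ℤ),(0:ℤ)) ∨
    (q.1 - p.1, q.2 - p.2) = ((0:ℤ),(1:ℤ)) ∨ (q.1 - p.1, q.2 - p.2) = ((0:ℤ),(-1:ℤ)) := by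
  unfold Adjacent at h
  simp only [Prod.mk.injEq]
  omega

/-- Any domino is congruent to any domino. -/
lemma domino_cong {p q r s : Cell} (h1 : Adjacent p q) (h2 : Adjacent r s) :
    CellCongruent {p, q} {r, s} := by
  obtain ⟨a, b, c, hL⟩ := units_map (adj_four h1) (adj_four h2)
  refine ⟨symF (r.1 - (Lpart a b c p).1, r.2 - (Lpart a b c p).2) a b c,
    symF_isSym _ _ _ _, ?_⟩
  rw [Set.image_pair]
  have hq : q = (p.1 + (q.1 - p.1), p.2 + (q.2 - p.2)) := by simp
  have key := Lpart_add a b c p (q.1 - p.1, q.2 - p.2)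
  have h1' : symF (r.1 - (Lpart a b c p).1, r.2 - (Lpart a b c p).2) a b c p = r := by
    simp [symF, Prod.ext_iff]
  have h2' : symF (r.1 - (Lpart a b c p).1, r.2 - (Lpart a b c p).2) a b c q = s := by
    rw [hq]
    simp only [symF]
    rw [key, hL]
    have hs : s = (r.1 + (s.1 - r.1), r.2 + (s.2 - r.2)) := by simp
    rw [hs]
    simp [Prod.ext_iff]
    constructor <;> ring
  rw [h1', h2']

lemma singleton_cong (p r : Cell) : CellCongruent {p} {r} := by
  refine ⟨symF (r.1 - p.1, r.2 - p.2) true true false, symF_isSym _ _ _ _, ?_⟩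
  rw [Set.image_singleton]
  simp [symF, Lpart]

lemma sym_adj {g : Cell → Cell} (hg : IsSym g) {p q : Cell} (h : Adjacent p q) :
    Adjacent (g p) (g q) := by
  obtain ⟨t, a, b, s, hf⟩ := hg
  rw [hf p, hf q]
  unfold Adjacent at *
  rcases a <;> rcases b <;> rcases s <;> simp <;> omega

lemma sym_ne {g : Cell → Cell} (hg : IsSym g) {p q : Cell} (h : p ≠ q) :
    g p ≠ g q := by
  obtain ⟨t, a, b, s, hf⟩ := hg
  intro he
  rw [hf p, hf q] at he
  apply h
  rw [Prod.ext_iff] at he ⊢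
  rcases a <;> rcases b <;> rcases s <;> simp at he <;> omega

lemma sym_mid {g : Cell → Cell} (hg : IsSym g) {x y z : Cell}
    (h : x.1 + z.1 = 2 * y.1 ∧ x.2 + z.2 = 2 * y.2) :
    (g x).1 + (g z).1 = 2 * (g y).1 ∧ (g x).2 + (g z).2 = 2 * (g y).2 := by
  obtain ⟨t, a, b, s, hf⟩ := hg
  rw [hf x, hf y, hf z]
  rcases a <;> rcases b <;> rcases s <;> simp <;> omega

/-- walking out of an adjacent pair produces a tromino -/
lemma exit_walk {P : Set Cell} {p q r : Cell} (hp : p ∈ P) (hq : q ∈ P)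
    (hpq : Adjacent p q) (hrp : r ≠ p) (hrq : r ≠ q) :
    ∀ u, Relation.ReflTransGen (fun x y => x ∈ P ∧ y ∈ P ∧ Adjacent x y) u r →
      (u = p ∨ u = q) →
      ∃ x y z, x ∈ P ∧ y ∈ P ∧ z ∈ P ∧ Adjacent x y ∧ Adjacent y z ∧ x ≠ z := by
  intro u hwalk
  induction hwalk using Relation.ReflTransGen.head_induction_on with
  | refl =>
    rintro (rfl | rfl)
    · exact absurd rfl hrp
    · exact absurd rfl hrq
  | head hst hrest ih =>
    rename_i c d
    rintro (rfl | rfl)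
    · -- c = p, step from c to d
      by_cases hd : d = c ∨ d = q
      · exact ih hd
      · push_neg at hd
        exact ⟨q, c, d, hq, hp, hst.2.1, adj_symm_s14 hpq, hst.2.2, fun h => hd.2 h.symm⟩
    · -- c = q
      by_cases hd : d = p ∨ d = c
      · exact ih hd
      · push_neg at hd
        exact ⟨p, c, d, hp, hq, hst.2.1, hpq, hst.2.2, fun h => hd.1 h.symm⟩

/-- Every polyomino with more than two cells contains a tromino. -/
lemma tromino_exists {P : Set Cell} (hP : IsPolyomino P) (h3 : ¬ P.encard ≤ 2) :
    ∃ x y z, x ∈ P ∧ y ∈ P ∧ z ∈ P ∧ Adjacent x y ∧ Adjacent y z ∧ x ≠ z := by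
  obtain ⟨hne, hconn⟩ := hP
  have h2 : 1 < P.encard := by
    by_contra hc
    push_neg at hc
    exact h3 (le_trans hc (by norm_num))
  rw [Set.one_lt_encard_iff] at h2
  obtain ⟨a, b, ha, hb, hab⟩ := h2
  have hpath := hconn a ha b hb
  rcases hpath.cases_head with heq | ⟨v, ⟨_, hvP, hadj⟩, _⟩
  · exact absurd heq hab
  have hav : Adjacent a v := hadj
  have hsub : ¬ P ⊆ {a, v} := by
    intro hsub
    apply h3
    calc P.encard ≤ ({a, v} : Set Cell).encard := Set.encard_le_encard hsub
    _ ≤ 2 := (Set.encard_insert_le _ _).trans (by rw [Set.encard_singleton]; norm_num)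
  obtain ⟨r, hrP, hrav⟩ := Set.not_subset.mp hsub
  simp only [Set.mem_insert_iff, Set.mem_singleton_iff, not_or] at hrav
  exact exit_walk ha hvP hav hrav.1 hrav.2 a (hconn a ha r hrP) (Or.inl rfl)

/-! ### Breaker machinery -/

/-- A bound on the coordinates of marked cells. -/
def sumS (ms : List Cell) (bs : List (Cell × Cell)) : ℤ :=
  ((ms ++ bs.map Prod.fst ++ bs.map Prod.snd).map (fun c => |c.1| + |c.2|)).sum

lemma sumS_nonneg (ms : List Cell) (bs : List (Cell × Cell)) : 0 ≤ sumS ms bs := by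
  apply List.sum_nonneg
  intro x hx
  simp only [List.mem_map] at hx
  obtain ⟨c, _, rfl⟩ := hx
  positivity

lemma marked_bound {ms bs} {c : Cell} (h : c ∈ markedCells ms bs) :
    |c.1| + |c.2| ≤ sumS ms bs := by
  apply List.single_le_sum (l := (ms ++ bs.map Prod.fst ++ bs.map Prod.snd).map
    (fun c => |c.1| + |c.2|))
  · intro x hx
    simp only [List.mem_map] at hx
    obtain ⟨d, _, rfl⟩ := hx
    positivity
  · simp only [List.mem_map]
    refine ⟨c, ?_, rfl⟩
    simp only [List.mem_append, List.mem_map]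
    rcases h with h | ⟨p, hp, h | h⟩
    · exact Or.inl (Or.inl h)
    · exact Or.inl (Or.inr ⟨p, hp, h.symm⟩)
    · exact Or.inr ⟨p, hp, h.symm⟩

/-- A cell guaranteed to be unmarked. -/
def freshCell (ms : List Cell) (bs : List (Cell × Cell)) (k : ℤ) : Cell :=
  (sumS ms bs + 3 + k, sumS ms bs + 3)

lemma freshCell_unmarked (ms bs) (k : ℤ) (hk : 0 ≤ k) :
    freshCell ms bs k ∉ markedCells ms bs := by
  intro h
  have := marked_bound h
  simp only [freshCell] at this
  have h0 := sumS_nonneg ms bs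
  have h1 : |sumS ms bs + 3 + k| = sumS ms bs + 3 + k := abs_of_nonneg (by omega)
  have h2 : |sumS ms bs + 3| = sumS ms bs + 3 := abs_of_nonneg (by omega)
  omega

open Classical in
/-- The paving breaker strategy determined by two partner functions. -/
noncomputable def tauP (f1 f2 : Cell → Cell) : BStrategy := fun ms bs =>
  let last := ms.getLastD (0, 0)
  (if f1 last ∈ markedCells ms bs then freshCell ms bs 0 else f1 last,
   if f2 last ∈ markedCells ms bs then freshCell ms bs 1 else f2 last)

/-- Hypotheses on a pair of partner functions. -/
structure GoodPaving (f1 f2 : Cell → Cell) : Prop where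
  ne : ∀ a, f1 a ≠ f2 a
  irr1 : ∀ a, f1 a ≠ a
  irr2 : ∀ a, f2 a ≠ a
  symm : ∀ a c, (c = f1 a ∨ c = f2 a) → (a = f1 c ∨ a = f2 c)
  near1 : ∀ a, |(f1 a).2| ≤ |a.2| + 1
  near2 : ∀ a, |(f2 a).2| ≤ |a.2| + 1

lemma last_bound (ms : List Cell) (bs) :
    |(ms.getLastD (0,0)).2| ≤ sumS ms bs := by
  rcases List.eq_nil_or_concat ms with rfl | ⟨l, a, rfl⟩
  · simpa using sumS_nonneg [] bs
  · rw [List.concat_eq_append]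
    have hmem : (l ++ [a]).getLastD (0,0) ∈ l ++ [a] := by
      rw [List.getLastD_concat]
      simp
    have : (l ++ [a]).getLastD (0,0) ∈ markedCells (l ++ [a]) bs := Or.inl hmem
    have hb := marked_bound this
    have := abs_nonneg ((l ++ [a]).getLastD (0,0)).1
    omega

lemma tauP_legal {f1 f2} (hgp : GoodPaving f1 f2) : BLegal (tauP f1 f2) := by
  intro ms bs
  classical
  have hS := sumS_nonneg ms bs
  have hlb : |(ms.getLastD (0,0)).2| ≤ sumS ms bs := last_bound ms bs
  have hb1 : (f1 (ms.getLastD (0,0))).2 ≤ sumS ms bs + 1 :=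
    le_trans (le_abs_self _) (le_trans (hgp.near1 _) (by omega))
  have hb2 : (f2 (ms.getLastD (0,0))).2 ≤ sumS ms bs + 1 :=
    le_trans (le_abs_self _) (le_trans (hgp.near2 _) (by omega))
  have hfresh0 := freshCell_unmarked ms bs 0 (by norm_num)
  have hfresh1 := freshCell_unmarked ms bs 1 (by norm_num)
  simp only [tauP]
  split_ifs with h1 h2 h2 <;> refine ⟨?_, ?_, ?_⟩
  · simp only [freshCell, ne_eq, Prod.ext_iff, not_and]; omega
  · exact hfresh0
  · exact hfresh1
  · intro he
    rw [Prod.ext_iff] at he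
    simp only [freshCell] at he
    omega
  · exact hfresh0
  · exact h2
  · intro he
    rw [Prod.ext_iff] at he
    simp only [freshCell] at he
    omega
  · exact h1
  · exact hfresh1
  · exact hgp.ne _
  · exact h1
  · exact h2

lemma tauP_paving {f1 f2} (ms bs) :
    ∀ g, (g = f1 (ms.getLastD (0,0)) ∨ g = f2 (ms.getLastD (0,0))) →
      g ∉ markedCells ms bs →
      (g = (tauP f1 f2 ms bs).1 ∨ g = (tauP f1 f2 ms bs).2) := by
  intro g hg hnm
  classical
  rcases hg with rfl | rfl
  · left; simp only [tauP]; rw [if_neg hnm]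
  · right; simp only [tauP]; rw [if_neg hnm]

lemma markedCells_mono {ms bs ms' bs'} :
    markedCells ms bs ⊆ markedCells (ms ++ ms') (bs ++ bs') := by
  intro c hc
  rcases hc with h | ⟨p, hp, h⟩
  · exact Or.inl (List.mem_append_left _ h)
  · exact Or.inr ⟨p, List.mem_append_left _ hp, h⟩

lemma marked_concat_m {ms bs} {x : Cell} :
    markedCells (ms ++ [x]) bs = markedCells ms bs ∪ {x} := by
  ext c
  simp only [markedCells, Set.mem_setOf_eq, Set.mem_union, Set.mem_singleton_iff]
  constructor
  · rintro (h | h)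
    · rcases List.mem_append.mp h with h | h
      · exact Or.inl (Or.inl h)
      · exact Or.inr (List.mem_singleton.mp h)
    · exact Or.inl (Or.inr h)
  · rintro (h | h)
    · rcases h with h | h
      · exact Or.inl (List.mem_append_left _ h)
      · exact Or.inr h
    · exact Or.inl (List.mem_append_right _ (List.mem_singleton.mpr h))

lemma marked_concat_b {ms bs} {y : Cell × Cell} {c : Cell} :
    (c = y.1 ∨ c = y.2) → c ∈ markedCells ms (bs ++ [y]) := by
  intro h
  exact Or.inr ⟨y, List.mem_append_right _ (List.mem_singleton_self y), h⟩

lemma play_succ (σ : MStrategy) (τ : BStrategy) (n : ℕ) :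
    play σ τ (n+1) =
      ((play σ τ n).1 ++ [σ (play σ τ n).1 (play σ τ n).2],
       (play σ τ n).2 ++ [τ ((play σ τ n).1 ++ [σ (play σ τ n).1 (play σ τ n).2])
         (play σ τ n).2]) := rfl

/-- The key invariant: the breaker never lets the maker own two related cells. -/
lemma invariant {f1 f2} (hgp : GoodPaving f1 f2) (σ : MStrategy) (hσ : MLegal σ) (n : ℕ) :
    ∀ m ∈ (play σ (tauP f1 f2) n).1,
      (f1 m ∈ markedCells (play σ (tauP f1 f2) n).1 (play σ (tauP f1 f2) n).2 ∧
       f2 m ∈ markedCells (play σ (tauP f1 f2) n).1 (play σ (tauP f1 f2) n).2) ∧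
      (f1 m ∉ (play σ (tauP f1 f2) n).1 ∧ f2 m ∉ (play σ (tauP f1 f2) n).1) := by
  induction n with
  | zero => intro m hm; simp [play] at hm
  | succ n ih =>
    set τ := tauP f1 f2 with hτ
    set L := (play σ τ n).1 with hL
    set B := (play σ τ n).2 with hB
    set mv := σ L B with hmv
    set tv := τ (L ++ [mv]) B with htv
    have hplay : play σ τ (n+1) = (L ++ [mv], B ++ [tv]) := play_succ σ τ n
    have hmv_un : mv ∉ markedCells L B := hσ L B
    have hmid : markedCells (L ++ [mv]) B = markedCells L B ∪ {mv} := marked_concat_m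
    have hmono : markedCells (L ++ [mv]) B ⊆ markedCells (L ++ [mv]) (B ++ [tv]) := by
      have := @markedCells_mono (L ++ [mv]) B [] [tv]
      simpa using this
    have hmono0 : markedCells L B ⊆ markedCells (L ++ [mv]) (B ++ [tv]) :=
      @markedCells_mono L B [mv] [tv]
    rw [hplay]
    intro m hm
    simp only [List.mem_append, List.mem_singleton] at hm
    rcases hm with hm | rfl
    · -- old maker cell
      obtain ⟨⟨h1m, h2m⟩, h1nm, h2nm⟩ := ih m hm
      refine ⟨⟨hmono0 h1m, hmono0 h2m⟩, ?_, ?_⟩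
      · intro hmem
        simp only [List.mem_append, List.mem_singleton] at hmem
        rcases hmem with h | h
        · exact h1nm h
        · rw [h] at h1m; exact hmv_un h1m
      · intro hmem
        simp only [List.mem_append, List.mem_singleton] at hmem
        rcases hmem with h | h
        · exact h2nm h
        · rw [h] at h2m; exact hmv_un h2m
    · -- new maker cell mv
      have hlast : (L ++ [mv]).getLastD (0,0) = mv := List.getLastD_concat
      have hpart : ∀ g, (g = f1 mv ∨ g = f2 mv) →
          g ∈ markedCells (L ++ [mv]) (B ++ [tv]) := by
        intro g hg
        by_cases hgm : g ∈ markedCells (L ++ [mv]) B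
        · exact hmono hgm
        · have := tauP_paving (f1 := f1) (f2 := f2) (L ++ [mv]) B g (by rw [hlast]; exact hg) hgm
          exact marked_concat_b this
      have hnotold : ∀ g, (g = f1 mv ∨ g = f2 mv) → g ∉ L := by
        intro g hg hgL
        have hsym := hgp.symm mv g hg
        obtain ⟨⟨h1m, h2m⟩, _, _⟩ := ih g hgL
        rcases hsym with h | h
        · rw [h] at hmv_un; exact hmv_un h1m
        · rw [h] at hmv_un; exact hmv_un h2m
      refine ⟨⟨hpart _ (Or.inl rfl), hpart _ (Or.inr rfl)⟩, ?_, ?_⟩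
      · intro hmem
        simp only [List.mem_append, List.mem_singleton] at hmem
        rcases hmem with h | h
        · exact hnotold _ (Or.inl rfl) h
        · exact hgp.irr1 mv h
      · intro hmem
        simp only [List.mem_append, List.mem_singleton] at hmem
        rcases hmem with h | h
        · exact hnotold _ (Or.inr rfl) h
        · exact hgp.irr2 mv h

/-- The maker never owns two related cells against the paving strategy. -/
lemma no_pair {f1 f2} (hgp : GoodPaving f1 f2) (σ : MStrategy) (hσ : MLegal σ) (n : ℕ) :
    ∀ m ∈ (play σ (tauP f1 f2) n).1, ∀ m' ∈ (play σ (tauP f1 f2) n).1,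
      m' ≠ f1 m ∧ m' ≠ f2 m := by
  intro m hm m' hm'
  obtain ⟨_, h1, h2⟩ := invariant hgp σ hσ n m hm
  constructor
  · intro h; rw [h] at hm'; exact h1 hm'
  · intro h; rw [h] at hm'; exact h2 hm'

/-! ### The two concrete pavings -/

/-- Horizontal partner for the straight-tromino paving. -/
def fI1 (a : Cell) : Cell := if a.1 % 2 = 0 then (a.1 + 1, a.2) else (a.1 - 1, a.2)

/-- Vertical partner for the straight-tromino paving. -/
def fI2 (a : Cell) : Cell := if a.2 % 2 = 0 then (a.1, a.2 + 1) else (a.1, a.2 - 1)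

lemma fI_good : GoodPaving fI1 fI2 := by
  constructor
  · intro a
    unfold fI1 fI2
    split_ifs <;> simp [Prod.ext_iff] <;> omega
  · intro a
    unfold fI1
    split_ifs <;> simp [Prod.ext_iff] <;> omega
  · intro a
    unfold fI2
    split_ifs <;> simp [Prod.ext_iff] <;> omega
  · intro a c h
    unfold fI1 fI2 at *
    rcases a with ⟨a1, a2⟩; rcases c with ⟨c1, c2⟩
    simp only [Prod.ext_iff] at h ⊢
    split_ifs at h ⊢ <;> omega
  · intro a
    unfold fI1
    have := abs_nonneg a.2
    split_ifs <;> simp <;> omega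
  · intro a
    unfold fI2
    have := abs_nonneg a.2
    have h1 := le_abs_self a.2
    have h2 := neg_abs_le a.2
    split_ifs <;> simp only [abs_le] <;> constructor <;> omega

/-- Partners for the bent-tromino paving: both horizontal neighbours. -/
def fL1 (a : Cell) : Cell := (a.1 + 1, a.2)
def fL2 (a : Cell) : Cell := (a.1 - 1, a.2)

lemma fL_good : GoodPaving fL1 fL2 := by
  constructor
  · intro a; simp only [fL1, fL2, ne_eq, Prod.ext_iff, not_and]; omega
  · intro a; simp only [fL1, ne_eq, Prod.ext_iff, not_and]; omega
  · intro a; simp only [fL2, ne_eq, Prod.ext_iff, not_and]; omega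
  · intro a c h
    rcases a with ⟨a1, a2⟩; rcases c with ⟨c1, c2⟩
    simp only [fL1, fL2, Prod.ext_iff] at h ⊢
    omega
  · intro a; simp only [fL1]; omega
  · intro a; simp only [fL2]; omega

lemma fI1_iff (x y : Cell) :
    y = fI1 x ↔ (y.2 = x.2 ∧ ((x.1 % 2 = 0 ∧ y.1 = x.1 + 1) ∨ (¬ x.1 % 2 = 0 ∧ y.1 = x.1 - 1))) := by
  unfold fI1
  rcases x with ⟨x1, x2⟩; rcases y with ⟨y1, y2⟩
  split_ifs with h <;> simp [Prod.ext_iff, h] <;> tauto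

lemma fI2_iff (x y : Cell) :
    y = fI2 x ↔ (y.1 = x.1 ∧ ((x.2 % 2 = 0 ∧ y.2 = x.2 + 1) ∨ (¬ x.2 % 2 = 0 ∧ y.2 = x.2 - 1))) := by
  unfold fI2
  rcases x with ⟨x1, x2⟩; rcases y with ⟨y1, y2⟩
  split_ifs with h <;> simp [Prod.ext_iff, h] <;> tauto

/-- The straight-tromino paving kills straight trominoes. -/
lemma killI {x y z : Cell} (hxy : Adjacent x y) (hyz : Adjacent y z)
    (hmid : x.1 + z.1 = 2 * y.1 ∧ x.2 + z.2 = 2 * y.2) :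
    (y = fI1 x ∨ y = fI2 x) ∨ (z = fI1 y ∨ z = fI2 y) := by
  rcases adj_cases hxy with rfl | rfl | rfl | rfl <;>
    rcases adj_cases hyz with rfl | rfl | rfl | rfl <;>
    rw [fI1_iff, fI2_iff, fI1_iff, fI2_iff] <;>
    simp at hmid ⊢ <;>
    omega

lemma fL1_iff (x y : Cell) : y = fL1 x ↔ (y.1 = x.1 + 1 ∧ y.2 = x.2) := by
  unfold fL1; rcases x with ⟨x1, x2⟩; rcases y with ⟨y1, y2⟩; simp [Prod.ext_iff]

lemma fL2_iff (x y : Cell) : y = fL2 x ↔ (y.1 = x.1 - 1 ∧ y.2 = x.2) := by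
  unfold fL2; rcases x with ⟨x1, x2⟩; rcases y with ⟨y1, y2⟩; simp [Prod.ext_iff]

/-- The bent-tromino paving kills bent trominoes. -/
lemma killL {x y z : Cell} (hxy : Adjacent x y) (hyz : Adjacent y z) (hxz : x ≠ z)
    (hmid : ¬ (x.1 + z.1 = 2 * y.1 ∧ x.2 + z.2 = 2 * y.2)) :
    (y = fL1 x ∨ y = fL2 x) ∨ (z = fL1 y ∨ z = fL2 y) := by
  have hxz' : ¬ (x.1 = z.1 ∧ x.2 = z.2) := fun h => hxz (Prod.ext h.1 h.2)
  clear hxz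
  rcases adj_cases hxy with rfl | rfl | rfl | rfl <;>
    rcases adj_cases hyz with rfl | rfl | rfl | rfl <;>
    rw [fL1_iff, fL2_iff, fL1_iff, fL2_iff] <;>
    simp at hmid hxz' ⊢ <;>
    omega

/-- The breaker defeats any polyomino containing a tromino. -/
lemma notGameWinner {Q : Set Cell} {x y z : Cell} (hx : x ∈ Q) (hy : y ∈ Q) (hz : z ∈ Q)
    (hxy : Adjacent x y) (hyz : Adjacent y z) (hxz : x ≠ z) :
    ¬ GameWinner {Q} := by
  rintro ⟨σ, hσ, hwin⟩
  by_cases hmid : x.1 + z.1 = 2 * y.1 ∧ x.2 + z.2 = 2 * y.2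
  · -- straight tromino: use the fI paving
    obtain ⟨n, Q', hQ', S, hS, g, hg, himg⟩ := hwin (tauP fI1 fI2) (tauP_legal fI_good)
    rw [Set.mem_singleton_iff] at hQ'
    subst hQ'
    have hgx : g x ∈ makerSet σ (tauP fI1 fI2) n := hS (himg ▸ Set.mem_image_of_mem g hx)
    have hgy : g y ∈ makerSet σ (tauP fI1 fI2) n := hS (himg ▸ Set.mem_image_of_mem g hy)
    have hgz : g z ∈ makerSet σ (tauP fI1 fI2) n := hS (himg ▸ Set.mem_image_of_mem g hz)
    have hkill := killI (sym_adj hg hxy) (sym_adj hg hyz) (sym_mid hg hmid)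
    have hnp := no_pair fI_good σ hσ n
    rcases hkill with (h | h) | (h | h)
    · exact (hnp (g x) hgx (g y) hgy).1 h
    · exact (hnp (g x) hgx (g y) hgy).2 h
    · exact (hnp (g y) hgy (g z) hgz).1 h
    · exact (hnp (g y) hgy (g z) hgz).2 h
  · -- bent tromino: use the fL paving
    obtain ⟨n, Q', hQ', S, hS, g, hg, himg⟩ := hwin (tauP fL1 fL2) (tauP_legal fL_good)
    rw [Set.mem_singleton_iff] at hQ'
    subst hQ'
    have hgx : g x ∈ makerSet σ (tauP fL1 fL2) n := hS (himg ▸ Set.mem_image_of_mem g hx)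
    have hgy : g y ∈ makerSet σ (tauP fL1 fL2) n := hS (himg ▸ Set.mem_image_of_mem g hy)
    have hgz : g z ∈ makerSet σ (tauP fL1 fL2) n := hS (himg ▸ Set.mem_image_of_mem g hz)
    have hmid' : ¬ ((g x).1 + (g z).1 = 2 * (g y).1 ∧ (g x).2 + (g z).2 = 2 * (g y).2) := by
      intro hc
      obtain ⟨t, a, b, s, hf⟩ := hg
      apply hmid
      rw [hf x, hf y, hf z] at hc
      rcases a <;> rcases b <;> rcases s <;> simp at hc <;> constructor <;> omega
    have hkill := killL (sym_adj hg hxy) (sym_adj hg hyz) (sym_ne hg hxz) hmid'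
    have hnp := no_pair fL_good σ hσ n
    rcases hkill with (h | h) | (h | h)
    · exact (hnp (g x) hgx (g y) hgy).1 h
    · exact (hnp (g x) hgx (g y) hgy).2 h
    · exact (hnp (g y) hgy (g z) hgz).1 h
    · exact (hnp (g y) hgy (g z) hgz).2 h

/-! ### The maker side -/

open Classical in
/-- The maker strategy: first mark a fresh cell, afterwards mark an unmarked
neighbour of the first marked cell if possible, else a fresh cell. -/
noncomputable def mak : MStrategy := fun ms bs =>
  match ms.head? with
  | none => freshCell ms bs 0
  | some m0 =>
    if (m0.1 + 1, m0.2) ∈ markedCells ms bs then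
      if (m0.1 - 1, m0.2) ∈ markedCells ms bs then
        if (m0.1, m0.2 + 1) ∈ markedCells ms bs then
          if (m0.1, m0.2 - 1) ∈ markedCells ms bs then freshCell ms bs 0
          else (m0.1, m0.2 - 1)
        else (m0.1, m0.2 + 1)
      else (m0.1 - 1, m0.2)
    else (m0.1 + 1, m0.2)

lemma mak_legal : MLegal mak := by
  intro ms bs
  unfold mak
  cases ms.head? with
  | none => exact freshCell_unmarked ms bs 0 (by norm_num)
  | some m0 =>
    simp only
    split_ifs with h1 h2 h3 h4
    · exact freshCell_unmarked ms bs 0 (by norm_num)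
    · exact h4
    · exact h3
    · exact h2
    · exact h1

lemma mak_adj (τ : BStrategy) :
    ∃ c0 c1, (play mak τ 2).1 = [c0, c1] ∧ Adjacent c0 c1 := by
  classical
  refine ⟨mak [] [], mak [mak [] []] [τ [mak [] []] []], ?_, ?_⟩
  · show (play mak τ 1).1 ++ [mak (play mak τ 1).1 (play mak τ 1).2] = _
    have hp1 : play mak τ 1 = ([mak [] []], [τ [mak [] []] []]) := rfl
    rw [hp1]
    rfl
  · set c0 := mak [] [] with hc0
    set t1 := τ [c0] [] with ht1
    have hkey : ∀ c : Cell, c ∈ markedCells [c0] [t1] → c = c0 ∨ c = t1.1 ∨ c = t1.2 := by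
      intro c hc
      rcases hc with h | ⟨p, hp, h⟩
      · exact Or.inl (List.mem_singleton.mp h)
      · rw [List.mem_singleton] at hp
        subst hp
        exact Or.inr h
    have hmak : mak [c0] [t1] =
        (if (c0.1 + 1, c0.2) ∈ markedCells [c0] [t1] then
          if (c0.1 - 1, c0.2) ∈ markedCells [c0] [t1] then
            if (c0.1, c0.2 + 1) ∈ markedCells [c0] [t1] then
              if (c0.1, c0.2 - 1) ∈ markedCells [c0] [t1] then freshCell [c0] [t1] 0
              else (c0.1, c0.2 - 1)
            else (c0.1, c0.2 + 1)
          else (c0.1 - 1, c0.2)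
        else (c0.1 + 1, c0.2)) := rfl
    by_cases h1 : (c0.1 + 1, c0.2) ∈ markedCells [c0] [t1]
    · by_cases h2 : (c0.1 - 1, c0.2) ∈ markedCells [c0] [t1]
      · by_cases h3 : (c0.1, c0.2 + 1) ∈ markedCells [c0] [t1]
        · by_cases h4 : (c0.1, c0.2 - 1) ∈ markedCells [c0] [t1]
          · exfalso
            have e1 := hkey _ h1
            have e2 := hkey _ h2
            have e3 := hkey _ h3
            have e4 := hkey _ h4
            simp only [Prod.ext_iff] at e1 e2 e3 e4
            omega
          · rw [hmak, if_pos h1, if_pos h2, if_pos h3, if_neg h4]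
            unfold Adjacent; simp
        · rw [hmak, if_pos h1, if_pos h2, if_neg h3]
          unfold Adjacent; simp
      · rw [hmak, if_pos h1, if_neg h2]
        unfold Adjacent; simp
    · rw [hmak, if_neg h1]
      unfold Adjacent; simp

lemma congruent_self (T : Set Cell) : CellCongruent T T := by
  refine ⟨symF (0, 0) true true false, symF_isSym _ _ _ _, ?_⟩
  have hid : symF (0, 0) true true false = id := funext fun p => by
    simp [symF, Lpart]
  rw [hid, Set.image_id]

lemma triple_poly {x y z : Cell} (hxy : Adjacent x y) (hyz : Adjacent y z) :
    IsPolyomino ({x, y, z} : Set Cell) := by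
  constructor
  · exact ⟨x, by simp⟩
  · have hxT : x ∈ ({x, y, z} : Set Cell) := by simp
    have hyT : y ∈ ({x, y, z} : Set Cell) := by simp
    have hzT : z ∈ ({x, y, z} : Set Cell) := by simp
    set st := fun a b : Cell => a ∈ ({x, y, z} : Set Cell) ∧
      b ∈ ({x, y, z} : Set Cell) ∧ Adjacent a b with hst
    have sxy : st x y := ⟨hxT, hyT, hxy⟩
    have syx : st y x := ⟨hyT, hxT, adj_symm_s14 hxy⟩
    have syz : st y z := ⟨hyT, hzT, hyz⟩
    have szy : st z y := ⟨hzT, hyT, adj_symm_s14 hyz⟩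
    intro a ha b hb
    simp only [Set.mem_insert_iff, Set.mem_singleton_iff] at ha hb
    rcases ha with rfl | rfl | rfl <;> rcases hb with rfl | rfl | rfl
    · exact .refl
    · exact .single sxy
    · exact .head sxy (.single syz)
    · exact .single syx
    · exact .refl
    · exact .single syz
    · exact .head szy (.single syx)
    · exact .single szy
    · exact .refl

end Aux

/-- for every polyomino `P`, the singleton team `{P}` is a winner if and
only if `P` has size at most 2. -/
theorem stmt14 (P : Set Cell) (hP : IsPolyomino P) :
    Winner {P} ↔ P.encard ≤ 2 := by
  constructor
  · -- a winner has at most two cells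
    intro hw
    by_contra h3
    obtain ⟨x, y, z, hx, hy, hz, hxy, hyz, hxz⟩ := tromino_exists hP h3
    rcases hw with ⟨_, hgw⟩ | ⟨_, hall⟩
    · exact notGameWinner hx hy hz hxy hyz hxz hgw
    · -- unbounded case: defeat the bounded restriction {{x, y, z}}
      have hxT : x ∈ ({x, y, z} : Set Cell) := by simp
      have hyT : y ∈ ({x, y, z} : Set Cell) := by simp
      have hzT : z ∈ ({x, y, z} : Set Cell) := by simp
      have hbr : BoundedRestriction {P} {({x, y, z} : Set Cell)} := by
        refine ⟨fun _ => {x, y, z}, ?_, by rw [Set.image_singleton]⟩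
        intro Q hQ
        refine ⟨Set.toFinite _, triple_poly hxy hyz, ?_⟩
        rw [Set.mem_singleton_iff] at hQ
        subst hQ
        refine ⟨{x, y, z}, ?_, congruent_self _⟩
        intro c hc
        simp only [Set.mem_insert_iff, Set.mem_singleton_iff] at hc
        rcases hc with rfl | rfl | rfl
        · exact hx
        · exact hy
        · exact hz
      exact notGameWinner hxT hyT hzT hxy hyz hxz (hall _ hbr)
  · -- a polyomino with at most two cells is a winner
    intro h2
    left
    constructor
    · intro Q hQ
      rw [Set.mem_singleton_iff] at hQ
      subst hQ
      rw [← Set.encard_ne_top_iff]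
      intro htop
      rw [htop] at h2
      exact absurd h2 (by norm_num)
    · refine ⟨mak, mak_legal, ?_⟩
      intro τ hτ
      obtain ⟨c0, c1, hp2, hadj⟩ := mak_adj τ
      refine ⟨2, P, rfl, ?_⟩
      have hc0m : c0 ∈ makerSet mak τ 2 := by
        show c0 ∈ (play mak τ 2).1
        rw [hp2]; simp
      have hc1m : c1 ∈ makerSet mak τ 2 := by
        show c1 ∈ (play mak τ 2).1
        rw [hp2]; simp
      obtain ⟨p, hp⟩ := hP.1
      by_cases hsub : P ⊆ {p}
      · -- P is a single cell
        have hPeq : P = {p} := Set.Subset.antisymm hsub (by simpa using hp)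
        refine ⟨{c0}, by simpa using hc0m, ?_⟩
        rw [hPeq]
        exact singleton_cong p c0
      · -- P is a domino
        obtain ⟨q, hq, hqp⟩ := Set.not_subset.mp hsub
        rw [Set.mem_singleton_iff] at hqp
        have hPeq : P = {p, q} := by
          apply Set.Subset.antisymm
          · intro r hr
            by_contra hr2
            simp only [Set.mem_insert_iff, Set.mem_singleton_iff, not_or] at hr2
            have hsub3 : ({r, p, q} : Set Cell) ⊆ P := by
              intro c hc
              rcases hc with rfl | hc
              · exact hr
              · rcases hc with rfl | hc
                · exact hp
                · rw [Set.mem_singleton_iff] at hc; subst hc; exact hq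
            have he3 : ({r, p, q} : Set Cell).encard = 3 := by
              rw [Set.encard_insert_of_notMem (by simp [hr2.1, hr2.2]),
                Set.encard_pair (fun h => hqp h.symm)]
              rfl
            have := Set.encard_le_encard hsub3
            rw [he3] at this
            have hcon := le_trans this h2
            exact absurd hcon (by norm_num)
          · intro c hc
            rcases hc with rfl | hc
            · exact hp
            · rw [Set.mem_singleton_iff] at hc; subst hc; exact hq
        -- adjacency of p and q
        have hpq_adj : Adjacent p q := by
          have hpath := hP.2 p hp q hq
          rcases hpath.cases_head with heq | ⟨v, ⟨_, hvP, hadjpv⟩, _⟩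
          · exact absurd heq.symm hqp
          · rw [hPeq] at hvP
            rcases hvP with rfl | hv
            · exact absurd rfl (adj_ne hadjpv)
            · rw [Set.mem_singleton_iff] at hv; subst hv; exact hadjpv
        refine ⟨{c0, c1}, ?_, ?_⟩
        · intro c hc
          rcases hc with rfl | hc
          · exact hc0m
          · rw [Set.mem_singleton_iff] at hc; subst hc; exact hc1m
        · rw [hPeq]
          exact domino_cong hpq_adj hadj
end
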